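/- Consider a star graph with center v_0 and leaves t_1, …, t_n, where the edge {v_0, t_i} has positive integer weight γ_i, and let d_1, …, d_n be deadlines. There exists a walk starting at v_0 that visits each leaf t_i within time d_i if and only if for some (equivalently, every) permutation τ of {1,…,n} ordering the leaves by nondecreasing values of d_i + γ_i it holds that γ_{τ(k)} + 2·Σ_{j<k} γ_{τ(j)} ≤ d_{τ(k)} for every k ∈ {1,…,n}. (Theorem: if the maximal covering route covering all the targets exists on a SIMPLE-STAR instance, the Earliest Due Date order — by d_i + γ_i — yields it, in polynomial time.) -/

import Mathlib

open Finset

/-- `StarStep n γ u v c` holds iff `{u, v}` is an edge of weight `c` of the star graph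
with center `none` and leaves `some i` at distance `γ i` from the center. -/
inductive StarStep (n : ℕ) (γ : Fin n → ℕ) : Option (Fin n) → Option (Fin n) → ℕ → Prop
  | out (i : Fin n) : StarStep n γ none (some i) (γ i)
  | back (i : Fin n) : StarStep n γ (some i) none (γ i)

lemma starStep_cases {n : ℕ} {γ : Fin n → ℕ} {a b : Option (Fin n)} {cc : ℕ}
    (h : StarStep n γ a b cc) :
    (∃ i, a = none ∧ b = some i ∧ cc = γ i) ∨ (∃ i, a = some i ∧ b = none ∧ cc = γ i) := by
  cases h with
  | out i => exact Or.inl ⟨i, rfl, rfl, rfl⟩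
  | back i => exact Or.inr ⟨i, rfl, rfl, rfl⟩

noncomputable def Vis {n : ℕ} (x : ℕ → Option (Fin n)) (j : ℕ) : Finset (Fin n) :=
  @Finset.filter _ (fun i => ∃ l ≤ j, x l = some i)
    (fun _ => Classical.propDecidable _) Finset.univ

lemma mem_Vis {n : ℕ} {x : ℕ → Option (Fin n)} {j : ℕ} {i : Fin n} :
    i ∈ Vis x j ↔ ∃ l ≤ j, x l = some i := by
  simp [Vis, Finset.mem_filter]

lemma star_key {n : ℕ} (γ : Fin n → ℕ) (m : ℕ) (x : ℕ → Option (Fin n)) (c : ℕ → ℕ)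
    (h0 : x 0 = none) (hs : ∀ j < m, StarStep n γ (x j) (x (j + 1)) (c j)) :
    ∀ j ≤ m, 2 * ∑ i ∈ Vis x j, γ i
      ≤ (∑ l ∈ Finset.range j, c l) + (x j).elim 0 γ := by
  intro j
  induction j with
  | zero =>
    intro _
    have he : Vis x 0 = ∅ := by
      ext i
      simp [mem_Vis, Nat.le_zero, h0]
    rw [he]
    simp [h0]
  | succ j ih =>
    intro hj
    have hstep := hs j (by omega)
    have ihj := ih (by omega)
    rw [Finset.sum_range_succ]
    rcases starStep_cases hstep with ⟨i, ha, hb, hc⟩ | ⟨i, ha, hb, hc⟩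
    · -- out
      have hV : Vis x (j+1)
          = insert i (Vis x j) := by
        ext i'
        simp only [mem_Vis, Finset.mem_insert]
        constructor
        · rintro ⟨l, hl, hxl⟩
          by_cases hlj : l = j + 1
          · subst hlj; rw [hb] at hxl
            exact Or.inl (Option.some_injective _ hxl).symm
          · exact Or.inr ⟨l, by omega, hxl⟩
        · rintro (rfl | ⟨l, hl, hxl⟩)
          · exact ⟨j + 1, le_refl _, hb⟩
          · exact ⟨l, by omega, hxl⟩
      rw [ha] at ihj
      rw [hV, hb]
      simp only [Option.elim]
      by_cases hi : i ∈ Vis x j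
      · rw [Finset.insert_eq_self.mpr hi]
        simp only [Option.elim] at ihj
        omega
      · rw [Finset.sum_insert hi]
        simp only [Option.elim] at ihj
        omega
    · -- back
      have hV : Vis x (j+1)
          = Vis x j := by
        ext i'
        simp only [mem_Vis]
        constructor
        · rintro ⟨l, hl, hxl⟩
          by_cases hlj : l = j + 1
          · subst hlj; rw [hb] at hxl; exact nomatch hxl
          · exact ⟨l, by omega, hxl⟩
        · rintro ⟨l, hl, hxl⟩
          exact ⟨l, by omega, hxl⟩
      rw [ha] at ihj
      rw [hV, hb]
      simp only [Option.elim] at ihj ⊢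
      omega

lemma walk_to_cond {n : ℕ} {γ : Fin n → ℕ} {d : Fin n → ℕ}
    (hw : ∃ (m : ℕ) (x : ℕ → Option (Fin n)) (c : ℕ → ℕ),
        x 0 = none ∧
        (∀ j < m, StarStep n γ (x j) (x (j + 1)) (c j)) ∧
        (∀ i : Fin n, ∃ j ≤ m, x j = some i ∧ (∑ l ∈ Finset.range j, c l) ≤ d i))
    (τ : Equiv.Perm (Fin n))
    (hsort : ∀ i j : Fin n, i ≤ j → d (τ i) + γ (τ i) ≤ d (τ j) + γ (τ j)) :
    ∀ k : Fin n, γ (τ k) + 2 * ∑ j ∈ Finset.Iio k, γ (τ j) ≤ d (τ k) := by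
  obtain ⟨m, x, c, h0, hs, hv⟩ := hw
  choose s hsm hsx hsd using hv
  intro k
  obtain ⟨j₀, hj₀mem, hj₀max⟩ := Finset.exists_max_image (Finset.Iic k) (fun j => s (τ j))
    ⟨k, Finset.mem_Iic.mpr le_rfl⟩
  have hj₀k : j₀ ≤ k := Finset.mem_Iic.mp hj₀mem
  set J := s (τ j₀) with hJ
  have hkey := star_key γ m x c h0 hs J (hsm _)
  rw [hsx (τ j₀)] at hkey
  simp only [Option.elim] at hkey
  -- the image of τ over Iic k is a subset of the visited set at time J
  have hsub : (Finset.Iic k).image τ ⊆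
      Vis x J := by
    intro i hi
    obtain ⟨j, hjk, rfl⟩ := Finset.mem_image.mp hi
    exact mem_Vis.mpr ⟨s (τ j), hj₀max j hjk, hsx (τ j)⟩
  have hsum : ∑ j ∈ Finset.Iic k, γ (τ j)
      ≤ ∑ i ∈ Vis x J, γ i := by
    rw [← Finset.sum_image (fun a _ b _ h => τ.injective h)]
    exact Finset.sum_le_sum_of_subset hsub
  have hIic : ∑ j ∈ Finset.Iic k, γ (τ j) = ∑ j ∈ Finset.Iio k, γ (τ j) + γ (τ k) := by
    rw [← Finset.Iio_insert, Finset.sum_insert (by simp)]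
    omega
  have hd : ∑ l ∈ Finset.range J, c l ≤ d (τ j₀) := hsd (τ j₀)
  have hmono := hsort j₀ k hj₀k
  omega

lemma sum_Iio_fin {n : ℕ} (f : Fin n → ℕ) (k : Fin n) (g : ℕ → ℕ)
    (hg : ∀ j : Fin n, g j.val = f j) :
    ∑ j ∈ Finset.Iio k, f j = ∑ q ∈ Finset.range k.val, g q := by
  refine Finset.sum_nbij' (i := fun (j : Fin n) => (j : ℕ))
    (j := fun q => (⟨q % n, Nat.mod_lt _ k.pos⟩ : Fin n)) ?_ ?_ ?_ ?_ ?_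
  · intro a ha
    simpa [Finset.mem_range] using Finset.mem_Iio.mp ha
  · intro q hq
    have hq' : q < k.val := Finset.mem_range.mp hq
    have : q % n = q := Nat.mod_eq_of_lt (lt_trans hq' k.isLt)
    simp [Finset.mem_Iio, Fin.lt_iff_val_lt_val, this, hq']
  · intro a ha
    ext
    simp [Nat.mod_eq_of_lt a.isLt]
  · intro q hq
    have hq' : q < k.val := Finset.mem_range.mp hq
    simp [Nat.mod_eq_of_lt (lt_trans hq' k.isLt)]
  · intro a ha
    exact (hg a).symm

lemma cond_to_walk {n : ℕ} {γ : Fin n → ℕ} {d : Fin n → ℕ} (τ : Equiv.Perm (Fin n))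
    (hcond : ∀ k : Fin n, γ (τ k) + 2 * ∑ j ∈ Finset.Iio k, γ (τ j) ≤ d (τ k)) :
    ∃ (m : ℕ) (x : ℕ → Option (Fin n)) (c : ℕ → ℕ),
        x 0 = none ∧
        (∀ j < m, StarStep n γ (x j) (x (j + 1)) (c j)) ∧
        (∀ i : Fin n, ∃ j ≤ m, x j = some i ∧ (∑ l ∈ Finset.range j, c l) ≤ d i) := by
  set g : ℕ → ℕ := fun q => if h : q < n then γ (τ ⟨q, h⟩) else 0 with hgdef
  refine ⟨2 * n, fun j => if h : j % 2 = 1 ∧ j / 2 < n then some (τ ⟨j / 2, h.2⟩) else none,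
    fun j => g (j / 2), by simp, ?_, ?_⟩
  · intro j hj
    rcases Nat.even_or_odd j with ⟨q, hq⟩ | ⟨q, hq⟩
    · subst hq
      have hqn : q < n := by omega
      have h1 : (q + q) % 2 = 0 := by omega
      have h2 : (q + q) / 2 = q := by omega
      have h3 : (q + q + 1) % 2 = 1 := by omega
      have h4 : (q + q + 1) / 2 = q := by omega
      simp only [h1, h2, h3, h4, hgdef]
      rw [dif_neg (by omega), dif_pos ⟨trivial, hqn⟩, dif_pos hqn]
      exact StarStep.out _
    · subst hq
      have hqn : q < n := by omega
      have h3 : (2 * q + 1) % 2 = 1 := by omega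
      have h4 : (2 * q + 1) / 2 = q := by omega
      have h5 : (2 * q + 1 + 1) % 2 = 0 := by omega
      simp only [h3, h4, h5, hgdef]
      rw [dif_pos ⟨trivial, hqn⟩, dif_neg (by omega), dif_pos hqn]
      exact StarStep.back _
  · intro i
    set k : Fin n := τ.symm i with hk
    have hik : τ k = i := τ.apply_symm_apply i
    refine ⟨2 * k.val + 1, by omega, ?_, ?_⟩
    · have h3 : (2 * k.val + 1) % 2 = 1 := by omega
      have h4 : (2 * k.val + 1) / 2 = k.val := by omega
      have hfin : ∀ (h : (2 * k.val + 1) / 2 < n), (⟨(2 * k.val + 1) / 2, h⟩ : Fin n) = k :=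
        fun h => Fin.ext (by simpa using h4)
      beta_reduce
      rw [dif_pos (show (2 * k.val + 1) % 2 = 1 ∧ (2 * k.val + 1) / 2 < n from
        ⟨h3, by rw [h4]; exact k.isLt⟩), hfin, hik]
    · -- time bound
      have hsum : ∀ q : ℕ, q < n → ∑ l ∈ Finset.range (2 * q + 1), g (l / 2)
          = g q + 2 * ∑ p ∈ Finset.range q, g p := by
        intro q
        induction q with
        | zero => intro _; simp
        | succ q ih =>
          intro hq
          have ih' := ih (by omega)
          have : 2 * (q + 1) + 1 = (2 * q + 1) + 1 + 1 := by ring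
          rw [this, Finset.sum_range_succ, Finset.sum_range_succ, ih',
            Finset.sum_range_succ]
          have e1 : (2 * q + 1) / 2 = q := by omega
          have e2 : (2 * q + 1 + 1) / 2 = q + 1 := by omega
          rw [e1, e2]; ring
      have hIio : ∑ j ∈ Finset.Iio k, γ (τ j) = ∑ p ∈ Finset.range k.val, g p := by
        apply sum_Iio_fin
        intro j
        simp [hgdef, j.isLt]
      have hgk : g k.val = γ (τ k) := by simp [hgdef, k.isLt]
      calc ∑ l ∈ Finset.range (2 * k.val + 1), g (l / 2)
          = g k.val + 2 * ∑ p ∈ Finset.range k.val, g p := hsum k.val k.isLt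
        _ = γ (τ k) + 2 * ∑ j ∈ Finset.Iio k, γ (τ j) := by rw [hgk, hIio]
        _ ≤ d (τ k) := hcond k
        _ = d i := by rw [hik]

/-- On a SIMPLE-STAR instance, a walk from the center visiting every leaf `tᵢ` within its
deadline `dᵢ` exists iff for some — equivalently, for every — permutation `τ` ordering
the leaves by nondecreasing `dᵢ + γᵢ` (the Earliest Due Date order) one has
`γ_{τ(k)} + 2·Σ_{j<k} γ_{τ(j)} ≤ d_{τ(k)}` for every `k`. -/
theorem stmt8 (n : ℕ) (γ : Fin n → ℕ) (hγ : ∀ i, 0 < γ i) (d : Fin n → ℕ) :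
    ((∃ (m : ℕ) (x : ℕ → Option (Fin n)) (c : ℕ → ℕ),
        x 0 = none ∧
        (∀ j < m, StarStep n γ (x j) (x (j + 1)) (c j)) ∧
        (∀ i : Fin n, ∃ j ≤ m, x j = some i ∧ (∑ l ∈ Finset.range j, c l) ≤ d i)) ↔
      ∃ τ : Equiv.Perm (Fin n),
        (∀ i j : Fin n, i ≤ j → d (τ i) + γ (τ i) ≤ d (τ j) + γ (τ j)) ∧
        (∀ k : Fin n, γ (τ k) + 2 * ∑ j ∈ Finset.Iio k, γ (τ j) ≤ d (τ k))) ∧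
    ((∃ (m : ℕ) (x : ℕ → Option (Fin n)) (c : ℕ → ℕ),
        x 0 = none ∧
        (∀ j < m, StarStep n γ (x j) (x (j + 1)) (c j)) ∧
        (∀ i : Fin n, ∃ j ≤ m, x j = some i ∧ (∑ l ∈ Finset.range j, c l) ≤ d i)) ↔
      ∀ τ : Equiv.Perm (Fin n),
        (∀ i j : Fin n, i ≤ j → d (τ i) + γ (τ i) ≤ d (τ j) + γ (τ j)) →
        (∀ k : Fin n, γ (τ k) + 2 * ∑ j ∈ Finset.Iio k, γ (τ j) ≤ d (τ k))) := by
  have hτ0 : ∀ i j : Fin n, i ≤ j →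
      d (Tuple.sort (fun i => d i + γ i) i) + γ (Tuple.sort (fun i => d i + γ i) i)
      ≤ d (Tuple.sort (fun i => d i + γ i) j) + γ (Tuple.sort (fun i => d i + γ i) j) :=
    fun i j hij => Tuple.monotone_sort (fun i => d i + γ i) hij
  constructor
  · constructor
    · intro hw
      exact ⟨Tuple.sort (fun i => d i + γ i), hτ0, walk_to_cond hw _ hτ0⟩
    · rintro ⟨τ, _, hcond⟩
      exact cond_to_walk τ hcond
  · constructor
    · intro hw τ hsort
      exact walk_to_cond hw τ hsort
    · intro h
      exact cond_to_walk _ (h _ hτ0)
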